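/- Let $A_n$ be the $n \times n$ lower triangular matrix with entries $(A_n)_{k,i} = \frac{2(k-i+1)}{k(k+1)}$ for $i \le k$ and $0$ otherwise. Then $A_n$ is invertible and its inverse $L_n$ has entries $(L_n)_{k,k} = \frac{k(k+1)}{2}$, $(L_n)_{k,k-1} = -(k-1)k$, $(L_n)_{k,k-2} = \frac{(k-2)(k-1)}{2}$, and $0$ elsewhere. -/
import Mathlib


open Matrix

/-- The lower-triangular area matrix `A_n` with entries `(A_n)_{k,i} = 2(k-i+1)/(k(k+1))`
for `i ≤ k` (1-based indices) is invertible, and its inverse `L_n` is tridiagonal with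
`(L_n)_{k,k} = k(k+1)/2`, `(L_n)_{k,k-1} = -(k-1)k`, `(L_n)_{k,k-2} = (k-2)(k-1)/2`. -/
theorem stmt_9 (n : ℕ) (A L : Matrix (Fin n) (Fin n) ℝ)
    (hA : ∀ k i : Fin n, A k i =
      if i ≤ k then 2 * ((k.1 : ℝ) - (i.1 : ℝ) + 1) / (((k.1 : ℝ) + 1) * ((k.1 : ℝ) + 2))
      else 0)
    (hL : ∀ k i : Fin n, L k i =
      if i.1 = k.1 then ((k.1 : ℝ) + 1) * ((k.1 : ℝ) + 2) / 2
      else if i.1 + 1 = k.1 then -((k.1 : ℝ) * ((k.1 : ℝ) + 1))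
      else if i.1 + 2 = k.1 then ((k.1 : ℝ) - 1) * (k.1 : ℝ) / 2
      else 0) :
    IsUnit A ∧ A⁻¹ = L := by
  have key : L * A = 1 := by
    ext k j
    rw [Matrix.mul_apply, Matrix.one_apply]
    obtain ⟨m, hm⟩ := k
    obtain ⟨jv, hj⟩ := j
    have hsum1 : ∀ (c : ℕ), c < n → ∀ (X : ℝ),
        (∑ i : Fin n, if i.1 = c then X else 0) = X := by
      intro c hc X
      rw [Finset.sum_eq_single (⟨c, hc⟩ : Fin n)]
      · simp
      · intro b _ hb
        exact if_neg (fun h => hb (Fin.ext h))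
      · simp
    set a : ℕ → ℝ := fun p => if hp : p < n then A ⟨p, hp⟩ ⟨jv, hj⟩ else 0 with ha
    have hstep : ∀ i : Fin n, L ⟨m, hm⟩ i * A i ⟨jv, hj⟩ =
        (if i.1 = m then ((m : ℝ) + 1) * ((m : ℝ) + 2) / 2 * a m else 0)
        + (if i.1 + 1 = m then -((m : ℝ) * ((m : ℝ) + 1)) * a (m - 1) else 0)
        + (if i.1 + 2 = m then ((m : ℝ) - 1) * (m : ℝ) / 2 * a (m - 2) else 0) := by
      intro i
      rw [hL]
      obtain ⟨iv, hi⟩ := i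
      simp only
      by_cases h0 : iv = m
      · subst h0
        rw [if_pos rfl, if_pos rfl, if_neg (by omega), if_neg (by omega)]
        rw [ha]; simp only [dif_pos hi]; ring
      · rw [if_neg h0, if_neg h0]
        by_cases h1 : iv + 1 = m
        · rw [if_pos h1, if_pos h1, if_neg (by omega)]
          have hmi : m - 1 = iv := by omega
          rw [hmi, ha]; simp only [dif_pos hi]; ring
        · rw [if_neg h1, if_neg h1]
          by_cases h2 : iv + 2 = m
          · rw [if_pos h2, if_pos h2]
            have hmi : m - 2 = iv := by omega
            rw [hmi, ha]; simp only [dif_pos hi]; ring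
          · rw [if_neg h2, if_neg h2]; ring
    rw [Finset.sum_congr rfl fun i _ => hstep i, Finset.sum_add_distrib,
      Finset.sum_add_distrib]
    have e0 := hsum1 m hm (((m : ℝ) + 1) * ((m : ℝ) + 2) / 2 * a m)
    have e1 : (∑ i : Fin n, if i.1 + 1 = m then -((m : ℝ) * ((m : ℝ) + 1)) * a (m - 1) else 0)
        = if 1 ≤ m then -((m : ℝ) * ((m : ℝ) + 1)) * a (m - 1) else 0 := by
      by_cases h : 1 ≤ m
      · rw [if_pos h]
        calc (∑ i : Fin n, if i.1 + 1 = m then -((m : ℝ) * ((m : ℝ) + 1)) * a (m - 1) else 0)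
            = ∑ i : Fin n, if i.1 = m - 1 then -((m : ℝ) * ((m : ℝ) + 1)) * a (m - 1) else 0 :=
              Finset.sum_congr rfl fun i _ => if_congr (by omega) rfl rfl
          _ = _ := hsum1 (m - 1) (by omega) _
      · rw [if_neg h]
        exact Finset.sum_eq_zero fun i _ => if_neg (by omega)
    have e2 : (∑ i : Fin n, if i.1 + 2 = m then ((m : ℝ) - 1) * (m : ℝ) / 2 * a (m - 2) else 0)
        = if 2 ≤ m then ((m : ℝ) - 1) * (m : ℝ) / 2 * a (m - 2) else 0 := by
      by_cases h : 2 ≤ m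
      · rw [if_pos h]
        calc (∑ i : Fin n, if i.1 + 2 = m then ((m : ℝ) - 1) * (m : ℝ) / 2 * a (m - 2) else 0)
            = ∑ i : Fin n, if i.1 = m - 2 then ((m : ℝ) - 1) * (m : ℝ) / 2 * a (m - 2) else 0 :=
              Finset.sum_congr rfl fun i _ => if_congr (by omega) rfl rfl
          _ = _ := hsum1 (m - 2) (by omega) _
      · rw [if_neg h]
        exact Finset.sum_eq_zero fun i _ => if_neg (by omega)
    rw [e0, e1, e2]
    have hfin : ((⟨m, hm⟩ : Fin n) = ⟨jv, hj⟩) ↔ m = jv := by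
      simp [Fin.ext_iff]
    rw [if_congr hfin rfl rfl]
    have haval : ∀ (p : ℕ), p < n → a p =
        if jv ≤ p then 2 * ((p : ℝ) - (jv : ℝ) + 1) / (((p : ℝ) + 1) * ((p : ℝ) + 2))
        else 0 := by
      intro p hp
      rw [ha]
      simp only [dif_pos hp, hA]
      rfl
    rcases Nat.lt_or_ge m 2 with h2 | h2
    · rcases (by omega : m = 0 ∨ m = 1) with rfl | rfl
      · rw [if_neg (by omega), if_neg (by omega), haval 0 hm]
        by_cases hj0 : jv = 0
        · subst hj0; norm_num
        · rw [if_neg (by omega), if_neg (by omega)]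
          norm_num
      · rw [if_pos (by omega), if_neg (by omega), haval 1 hm, haval 0 (by omega)]
        rcases (by omega : jv = 0 ∨ jv = 1 ∨ 2 ≤ jv) with rfl | rfl | hj2
        · rw [if_pos (by omega), if_pos (by omega), if_neg (by omega)]
          norm_num
        · rw [if_pos (by omega), if_neg (by omega), if_pos rfl]
          norm_num
        · rw [if_neg (by omega), if_neg (by omega), if_neg (by omega)]
          norm_num
    · rw [if_pos (by omega), if_pos h2, haval m hm, haval (m - 1) (by omega),
        haval (m - 2) (by omega)]
      have hcast1 : ((m - 1 : ℕ) : ℝ) = (m : ℝ) - 1 := by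
        rw [Nat.cast_sub (by omega)]; norm_num
      have hcast2 : ((m - 2 : ℕ) : ℝ) = (m : ℝ) - 2 := by
        rw [Nat.cast_sub (by omega)]; norm_num
      rw [hcast1, hcast2]
      rw [(by ring : (m : ℝ) - 1 + 1 = (m : ℝ)), (by ring : (m : ℝ) - 1 + 2 = (m : ℝ) + 1),
        (by ring : (m : ℝ) - 2 + 1 = (m : ℝ) - 1), (by ring : (m : ℝ) - 2 + 2 = (m : ℝ))]
      have hm2 : (2 : ℝ) ≤ (m : ℝ) := by exact_mod_cast h2
      have d0 : (m : ℝ) ≠ 0 := by linarith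
      have d1 : (m : ℝ) + 1 ≠ 0 := by linarith
      have d2 : (m : ℝ) + 2 ≠ 0 := by linarith
      have d3 : (m : ℝ) - 1 ≠ 0 := by linarith
      by_cases hje : m = jv
      · rw [if_pos hje, if_pos (by omega), if_neg (by omega), if_neg (by omega)]
        subst hje
        field_simp
        all_goals ring
      · rw [if_neg hje]
        by_cases hje1 : jv + 1 = m
        · rw [if_pos (by omega), if_pos (by omega), if_neg (by omega)]
          have hc : (m : ℝ) = (jv : ℝ) + 1 := by exact_mod_cast hje1.symm
          have hj0 : (0 : ℝ) ≤ (jv : ℝ) := Nat.cast_nonneg jv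
          rw [hc]
          have e1' : (jv : ℝ) + 1 + 1 ≠ 0 := by linarith
          have e2' : (jv : ℝ) + 1 + 2 ≠ 0 := by linarith
          have e3' : (jv : ℝ) + 1 ≠ 0 := by linarith
          field_simp
          all_goals ring
        · by_cases hle : jv + 2 ≤ m
          · rw [if_pos (by omega), if_pos (by omega), if_pos (by omega)]
            field_simp
            all_goals ring
          · rw [if_neg (by omega), if_neg (by omega), if_neg (by omega)]
            norm_num
  have hAL : A * L = 1 := mul_eq_one_comm.mp key
  have : Invertible A := invertibleOfRightInverse A L hAL
  exact ⟨isUnit_of_invertible A, Matrix.inv_eq_left_inv key⟩
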